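/- Let f be L-smooth with f(x₀) − min f ≤ M. Suppose a sequence x₀, x₁, …, x_T satisfies f_t(x_{t+1}) − min_x f_t(x) ≤ Γ for all t, where f_t(x) = f(x) + (3L/2)‖x − x_t‖². Then (1/T)∑_{t=1}^{T} ‖∇f(x_t)‖² ≤ (8L/T)(M + TΓ). -/

import Mathlib

open InnerProductSpace

variable {d : ℕ}

private lemma aux_lip {f : EuclideanSpace ℝ (Fin d) → ℝ} {L : ℝ} (hL : 0 < L)
    (hf : ContDiff ℝ 2 f) (hHess : ∀ z, ‖iteratedFDeriv ℝ 2 f z‖ ≤ L) :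
    ∀ a b, ‖fderiv ℝ f a - fderiv ℝ f b‖ ≤ L * ‖a - b‖ := by
  have hdf : ContDiff ℝ 1 (fderiv ℝ f) := hf.fderiv_right (by norm_num)
  have hbound : ∀ z, ‖fderiv ℝ (fderiv ℝ f) z‖₊ ≤ L.toNNReal := by
    intro z
    have h1 : iteratedFDeriv ℝ 1 (fderiv ℝ f) z =
        (continuousMultilinearCurryFin1 ℝ (EuclideanSpace ℝ (Fin d))
          (EuclideanSpace ℝ (Fin d) →L[ℝ] ℝ)).symm (fderiv ℝ (fderiv ℝ f) z) := by
      ext m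
      simp [iteratedFDeriv_one_apply]
    have h2 : ‖fderiv ℝ (fderiv ℝ f) z‖ = ‖iteratedFDeriv ℝ 2 f z‖ := by
      rw [← norm_iteratedFDeriv_fderiv (n := 1), h1, LinearIsometryEquiv.norm_map]
    rw [← NNReal.coe_le_coe, coe_nnnorm, Real.coe_toNNReal _ hL.le, h2]
    exact hHess z
  have hlip : LipschitzWith L.toNNReal (fderiv ℝ f) :=
    lipschitzWith_of_nnnorm_fderiv_le (hdf.differentiable (by norm_num)) hbound
  intro a b
  have := hlip.dist_le_mul a b
  rwa [dist_eq_norm, dist_eq_norm, Real.coe_toNNReal _ hL.le] at this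

private lemma aux_descent {f : EuclideanSpace ℝ (Fin d) → ℝ} {L : ℝ} (hL : 0 < L)
    (hf : ContDiff ℝ 2 f) (hHess : ∀ z, ‖iteratedFDeriv ℝ 2 f z‖ ≤ L) (a b : EuclideanSpace ℝ (Fin d)) :
    f b ≤ f a + fderiv ℝ f a (b - a) + L / 2 * ‖b - a‖ ^ 2 := by
  have hdiff : Differentiable ℝ f := hf.differentiable (by norm_num)
  have hlip := aux_lip hL hf hHess
  set v := b - a with hv
  set c : ℝ := fderiv ℝ f a v with hc
  set φ : ℝ → ℝ := fun t => f (a + t • v) - t * c - L / 2 * t ^ 2 * ‖v‖ ^ 2 with hφ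
  have hder : ∀ t : ℝ, HasDerivAt φ
      (fderiv ℝ f (a + t • v) v - c - L / 2 * (2 * t) * ‖v‖ ^ 2) t := by
    intro t
    have hline : HasDerivAt (fun t : ℝ => a + t • v) v t := by
      simpa using ((hasDerivAt_id t).smul_const v).const_add a
    have h1 : HasDerivAt (fun t : ℝ => f (a + t • v)) (fderiv ℝ f (a + t • v) v) t :=
      (hdiff (a + t • v)).hasFDerivAt.comp_hasDerivAt t hline
    have h2 : HasDerivAt (fun t : ℝ => t * c) c t := by
      simpa using (hasDerivAt_id t).mul_const c
    have h3 : HasDerivAt (fun t : ℝ => L / 2 * t ^ 2 * ‖v‖ ^ 2)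
        (L / 2 * (2 * t) * ‖v‖ ^ 2) t := by
      have := ((hasDerivAt_pow 2 t).const_mul (L / 2)).mul_const (‖v‖ ^ 2)
      simpa [pow_one, mul_comm] using this
    exact (h1.sub h2).sub h3
  have hmono : AntitoneOn φ (Set.Icc (0:ℝ) 1) := by
    apply antitoneOn_of_deriv_nonpos (convex_Icc 0 1)
    · exact Continuous.continuousOn (by
        fun_prop)
    · intro t ht
      exact ((hder t).differentiableAt).differentiableWithinAt
    · intro t ht
      rw [interior_Icc] at ht
      rw [(hder t).deriv]
      have hineq : fderiv ℝ f (a + t • v) v - c ≤ L * t * ‖v‖ ^ 2 := by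
        have h1 : fderiv ℝ f (a + t • v) v - c = (fderiv ℝ f (a + t • v) - fderiv ℝ f a) v := by
          simp [hc]
        have h2 : (fderiv ℝ f (a + t • v) - fderiv ℝ f a) v ≤
            ‖fderiv ℝ f (a + t • v) - fderiv ℝ f a‖ * ‖v‖ :=
          le_trans (le_abs_self _) ((fderiv ℝ f (a + t • v) - fderiv ℝ f a).le_opNorm v)
        have h3 : ‖fderiv ℝ f (a + t • v) - fderiv ℝ f a‖ ≤ L * (t * ‖v‖) := by
          have := hlip (a + t • v) a
          simpa [norm_smul, abs_of_pos ht.1] using this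
        calc fderiv ℝ f (a + t • v) v - c = _ := h1
          _ ≤ ‖fderiv ℝ f (a + t • v) - fderiv ℝ f a‖ * ‖v‖ := h2
          _ ≤ L * (t * ‖v‖) * ‖v‖ := by
              apply mul_le_mul_of_nonneg_right h3 (norm_nonneg v)
          _ = L * t * ‖v‖ ^ 2 := by ring
      nlinarith [hineq]
  have hle : φ 1 ≤ φ 0 := hmono (Set.left_mem_Icc.2 zero_le_one)
    (Set.right_mem_Icc.2 zero_le_one) zero_le_one
  simp only [hφ, one_smul, zero_smul, add_zero, zero_mul, sub_zero, one_mul, one_pow] at hle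
  have : a + v = b := by simp [hv]
  rw [this] at hle
  linarith

theorem stmt6 {d : ℕ} (f : EuclideanSpace ℝ (Fin d) → ℝ) (L M Γ fstar : ℝ)
    (hL : 0 < L) (hΓ : 0 ≤ Γ)
    (hf : ContDiff ℝ 2 f)
    (hHess : ∀ z, ‖iteratedFDeriv ℝ 2 f z‖ ≤ L)
    (hmin : ∀ y, fstar ≤ f y)
    (T : ℕ) (hT : 1 ≤ T)
    (x : ℕ → EuclideanSpace ℝ (Fin d))
    (hM : f (x 0) - fstar ≤ M)
    (happrox : ∀ t < T, ∀ y,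
      f (x (t + 1)) + 3 * L / 2 * ‖x (t + 1) - x t‖ ^ 2 ≤
        f y + 3 * L / 2 * ‖y - x t‖ ^ 2 + Γ) :
    (1 / (T : ℝ)) * ∑ t ∈ Finset.range T, ‖gradient f (x t)‖ ^ 2 ≤
      8 * L / (T : ℝ) * (M + T * Γ) := by
  have hstep : ∀ t < T, f (x (t + 1)) ≤
      f (x t) - 1 / (8 * L) * ‖gradient f (x t)‖ ^ 2 + Γ := by
    intro t ht
    set g := gradient f (x t) with hg
    set y := x t - (1 / (4 * L)) • g with hy
    have h1 := happrox t ht y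
    have h2 := aux_descent hL hf hHess (x t) y
    have hyx : y - x t = -((1 / (4 * L)) • g) := by simp [hy]
    have hfd : fderiv ℝ f (x t) (y - x t) = -(1 / (4 * L)) * ‖g‖ ^ 2 := by
      have hfg : fderiv ℝ f (x t) (y - x t) = ⟪g, y - x t⟫_ℝ := by
        rw [hg, gradient]
        rw [← InnerProductSpace.toDual_apply_apply]
        simp
      rw [hfg, hyx, inner_neg_right, real_inner_smul_right, real_inner_self_eq_norm_sq]
      ring
    have hny : ‖y - x t‖ ^ 2 = (1 / (4 * L)) ^ 2 * ‖g‖ ^ 2 := by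
      rw [hyx, norm_neg, norm_smul]
      rw [Real.norm_eq_abs, abs_of_pos (by positivity)]
      ring
    have hnn : 0 ≤ 3 * L / 2 * ‖x (t + 1) - x t‖ ^ 2 := by positivity
    have hL' : L ≠ 0 := ne_of_gt hL
    rw [hfd, hny] at h2
    have : f (x (t + 1)) ≤ f y + 3 * L / 2 * ((1 / (4 * L)) ^ 2 * ‖g‖ ^ 2) + Γ := by
      rw [hny] at h1; linarith
    have key : f y + 3 * L / 2 * ((1 / (4 * L)) ^ 2 * ‖g‖ ^ 2) ≤
        f (x t) - 1 / (8 * L) * ‖g‖ ^ 2 := by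
      have e : -(1 / (4 * L)) * ‖g‖ ^ 2 + L / 2 * ((1 / (4 * L)) ^ 2 * ‖g‖ ^ 2)
          + 3 * L / 2 * ((1 / (4 * L)) ^ 2 * ‖g‖ ^ 2) = - (1 / (8 * L)) * ‖g‖ ^ 2 := by
        field_simp
        ring
      nlinarith [h2]
    linarith
  have hsum : ∀ n ≤ T, (∑ t ∈ Finset.range n, ‖gradient f (x t)‖ ^ 2) ≤
      8 * L * (f (x 0) - f (x n) + n * Γ) := by
    intro n hn
    induction n with
    | zero => simp
    | succ m ih =>
      have hm : m < T := hn
      have ih' := ih (le_of_lt hm)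
      rw [Finset.sum_range_succ]
      have hs := hstep m hm
      have hs' : ‖gradient f (x m)‖ ^ 2 ≤ 8 * L * (f (x m) - f (x (m + 1)) + Γ) := by
        have h1 : 1 / (8 * L) * ‖gradient f (x m)‖ ^ 2 ≤ f (x m) - f (x (m + 1)) + Γ := by
          linarith
        calc ‖gradient f (x m)‖ ^ 2
            = 8 * L * (1 / (8 * L) * ‖gradient f (x m)‖ ^ 2) := by field_simp
          _ ≤ 8 * L * (f (x m) - f (x (m + 1)) + Γ) :=
              mul_le_mul_of_nonneg_left h1 (by positivity)
      push_cast
      nlinarith [ih', hs']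
  have hfin := hsum T le_rfl
  have hfb : f (x 0) - f (x T) ≤ M := by
    have := hmin (x T); linarith
  have hS : (∑ t ∈ Finset.range T, ‖gradient f (x t)‖ ^ 2) ≤ 8 * L * (M + T * Γ) := by
    refine le_trans hfin (mul_le_mul_of_nonneg_left (by linarith) (by positivity))
  have hT0 : (0:ℝ) < T := by exact_mod_cast Nat.lt_of_lt_of_le Nat.zero_lt_one hT
  calc (1 / (T:ℝ)) * ∑ t ∈ Finset.range T, ‖gradient f (x t)‖ ^ 2
      ≤ (1 / (T:ℝ)) * (8 * L * (M + T * Γ)) := by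
        apply mul_le_mul_of_nonneg_left hS (by positivity)
    _ = 8 * L / (T:ℝ) * (M + T * Γ) := by
        field_simp
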